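/- Let k₁₁ > 0 and k₂₂ > 0 be real numbers and ν real. All complex roots of the polynomial λ⁴ + (k₁₁ + k₂₂)λ² + (k₁₁k₂₂ + ν²) are simple and purely imaginary if and only if 4ν² < (k₁₁ − k₂₂)². -/
import Mathlib
open Polynomial

lemma aux_root_iff (a b : ℝ) (z : ℂ) :
    (X ^ 4 + C ((a : ℝ) : ℂ) * X ^ 2 + C ((b : ℝ) : ℂ)).IsRoot z ↔
      z ^ 4 + (a : ℂ) * z ^ 2 + (b : ℂ) = 0 := by
  simp [IsRoot, eval_add, eval_mul, eval_pow, eval_C, eval_X]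

lemma aux_ne_zero (a b : ℝ) :
    (X ^ 4 + C ((a : ℝ) : ℂ) * X ^ 2 + C ((b : ℝ) : ℂ)) ≠ 0 := by
  intro h
  have h4 := congrArg (fun q => Polynomial.coeff q 4) h
  simp [coeff_add, coeff_C_mul, coeff_X_pow, coeff_C] at h4

lemma aux_deriv (a b : ℝ) (z : ℂ) :
    (derivative (X ^ 4 + C ((a : ℝ) : ℂ) * X ^ 2 + C ((b : ℝ) : ℂ))).eval z
      = 4 * z ^ 3 + 2 * (a : ℂ) * z := by
  simp [derivative_add, derivative_C_mul, derivative_X_pow, derivative_C]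
  ring

/-- If `z` is a root and the derivative does not vanish, multiplicity is one. -/
lemma aux_mult_one (a b : ℝ) (z : ℂ)
    (hz : (X ^ 4 + C ((a : ℝ) : ℂ) * X ^ 2 + C ((b : ℝ) : ℂ)).IsRoot z)
    (hd : 4 * z ^ 3 + 2 * (a : ℂ) * z ≠ 0) :
    (X ^ 4 + C ((a : ℝ) : ℂ) * X ^ 2 + C ((b : ℝ) : ℂ)).rootMultiplicity z = 1 := by
  have hpne := aux_ne_zero a b
  have h1 : ¬ 1 < (X ^ 4 + C ((a : ℝ) : ℂ) * X ^ 2 + C ((b : ℝ) : ℂ)).rootMultiplicity z := by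
    rw [one_lt_rootMultiplicity_iff_isRoot hpne]
    rintro ⟨-, hder⟩
    exact hd (by rw [← aux_deriv a b z]; exact hder)
  have h2 := (rootMultiplicity_pos hpne).2 hz
  omega

/-- Marginal stability of the undamped circulatory system: all complex roots of
`λ⁴ + (k₁₁ + k₂₂)λ² + (k₁₁k₂₂ + ν²)` are simple and purely imaginary iff
`4ν² < (k₁₁ − k₂₂)²`. -/
theorem undamped_circulatory_marginal_stability (k₁₁ k₂₂ ν : ℝ)
    (hk₁₁ : 0 < k₁₁) (hk₂₂ : 0 < k₂₂) :
    (∀ z : ℂ, (X ^ 4 + C ((k₁₁ + k₂₂ : ℝ) : ℂ) * X ^ 2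
        + C ((k₁₁ * k₂₂ + ν ^ 2 : ℝ) : ℂ)).IsRoot z →
      z.re = 0 ∧ (X ^ 4 + C ((k₁₁ + k₂₂ : ℝ) : ℂ) * X ^ 2
        + C ((k₁₁ * k₂₂ + ν ^ 2 : ℝ) : ℂ)).rootMultiplicity z = 1) ↔
    4 * ν ^ 2 < (k₁₁ - k₂₂) ^ 2 := by
  set a : ℝ := k₁₁ + k₂₂ with ha
  set b : ℝ := k₁₁ * k₂₂ + ν ^ 2 with hb
  have hapos : 0 < a := by positivity
  have hbpos : 0 < b := by positivity
  constructor
  · -- reverse: roots simple & imaginary ⇒ discriminant positive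
    intro h
    by_contra hlt
    push_neg at hlt
    have hDle : a ^ 2 ≤ 4 * b := by nlinarith
    rcases eq_or_lt_of_le hDle with hDeq | hDlt
    · -- double root case
      set z : ℂ := (Real.sqrt (a / 2) : ℂ) * Complex.I with hzdef
      have hsq : ((Real.sqrt (a / 2) : ℝ) : ℂ) ^ 2 = ((a / 2 : ℝ) : ℂ) := by
        rw [← Complex.ofReal_pow, Real.sq_sqrt (by linarith)]
      have hz2 : z ^ 2 = -((a : ℂ) / 2) := by
        rw [hzdef]
        push_cast at hsq ⊢
        linear_combination Complex.I_sq * ((Real.sqrt (a/2) : ℂ))^2 + (-1 : ℂ) * hsq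
      have heq : (a : ℂ) ^ 2 = 4 * (b : ℂ) := by exact_mod_cast congrArg (Complex.ofReal) hDeq
      have hroot : (X ^ 4 + C ((a : ℝ) : ℂ) * X ^ 2 + C ((b : ℝ) : ℂ)).IsRoot z := by
        rw [aux_root_iff]
        linear_combination (z ^ 2 + (a : ℂ) / 2) * hz2 - (1 / 4 : ℂ) * heq
      have hmult := (h z hroot).2
      have h1lt : 1 < (X ^ 4 + C ((a : ℝ) : ℂ) * X ^ 2
          + C ((b : ℝ) : ℂ)).rootMultiplicity z := by
        rw [one_lt_rootMultiplicity_iff_isRoot (aux_ne_zero a b)]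
        refine ⟨hroot, ?_⟩
        show (derivative _).eval z = 0
        rw [aux_deriv]
        linear_combination (4 * z) * hz2
      omega
    · -- complex (non-real) μ case
      set s : ℝ := Real.sqrt (4 * b - a ^ 2) with hs
      have hspos : 0 < s := Real.sqrt_pos.2 (by linarith)
      have hs2 : ((s : ℝ) : ℂ) ^ 2 = 4 * (b : ℂ) - (a : ℂ) ^ 2 := by
        rw [← Complex.ofReal_pow, Real.sq_sqrt (by linarith)]
        push_cast; ring
      set w : ℂ := (-(a : ℂ) + (s : ℂ) * Complex.I) / 2 with hwdef
      have hw : w ^ 2 + (a : ℂ) * w + (b : ℂ) = 0 := by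
        rw [hwdef]
        linear_combination (((s : ℝ) : ℂ) ^ 2 / 4) * Complex.I_sq - (1 / 4 : ℂ) * hs2
      obtain ⟨z, hzw⟩ := Complex.isAlgClosed.exists_pow_nat_eq w (n := 2) (by norm_num)
      have hroot : (X ^ 4 + C ((a : ℝ) : ℂ) * X ^ 2 + C ((b : ℝ) : ℂ)).IsRoot z := by
        rw [aux_root_iff]
        linear_combination hw + (z ^ 2 + w + (a : ℂ)) * hzw
      have hre := (h z hroot).1
      have him : w.im = s / 2 := by
        rw [hwdef]
        simp [Complex.div_im, Complex.add_im, Complex.mul_im]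
      have hzim : (z ^ 2).im = 0 := by
        have h2 : (z ^ 2).im = 2 * z.re * z.im := by
          rw [pow_two, Complex.mul_im]; ring
        rw [h2, hre]; ring
      rw [hzw, him] at hzim
      linarith
  · -- forward: discriminant positive ⇒ roots simple & imaginary
    intro hdisc z hz
    have hD : 0 < a ^ 2 - 4 * b := by nlinarith
    set d : ℝ := Real.sqrt (a ^ 2 - 4 * b) with hd
    have hdpos : 0 < d := Real.sqrt_pos.2 hD
    have hdlt : d < a := by
      rw [hd]
      exact (Real.sqrt_lt' hapos).2 (by nlinarith)
    have hd2 : ((d : ℝ) : ℂ) ^ 2 = (a : ℂ) ^ 2 - 4 * (b : ℂ) := by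
      rw [← Complex.ofReal_pow, Real.sq_sqrt (le_of_lt hD)]
      push_cast; ring
    have hzeq : z ^ 4 + (a : ℂ) * z ^ 2 + (b : ℂ) = 0 := (aux_root_iff a b z).1 hz
    set w : ℂ := z ^ 2 with hwdef
    have hquad : w ^ 2 + (a : ℂ) * w + (b : ℂ) = 0 := by
      rw [hwdef]; linear_combination hzeq
    have hfact : (2 * w + (a : ℂ) - d) * (2 * w + (a : ℂ) + d) = 0 := by
      linear_combination 4 * hquad - hd2
    have hkey : w.im = 0 ∧ w.re < 0 ∧ 2 * w + (a : ℂ) ≠ 0 := by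
      rcases mul_eq_zero.1 hfact with hc | hc
      · have hweq : w = (((d - a) / 2 : ℝ) : ℂ) := by
          push_cast
          linear_combination hc / 2
        refine ⟨by rw [hweq]; simp, by rw [hweq]; simp; linarith, ?_⟩
        intro h0
        have hdz : ((d : ℝ) : ℂ) = 0 := by linear_combination h0 - hc
        have : d = 0 := by exact_mod_cast hdz
        linarith
      · have hweq : w = (((-d - a) / 2 : ℝ) : ℂ) := by
          push_cast
          linear_combination hc / 2
        refine ⟨by rw [hweq]; simp, by rw [hweq]; simp; linarith, ?_⟩
        intro h0
        have hdz : ((d : ℝ) : ℂ) = 0 := by linear_combination hc - h0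
        have : d = 0 := by exact_mod_cast hdz
        linarith
    obtain ⟨him, hreneg, hne⟩ := hkey
    have him' : z.re * z.im + z.im * z.re = 0 := by
      rw [hwdef, pow_two, Complex.mul_im] at him; exact him
    have hre' : z.re * z.re - z.im * z.im < 0 := by
      rw [hwdef, pow_two, Complex.mul_re] at hreneg; exact hreneg
    constructor
    · by_contra h0
      have hzim0 : z.im = 0 := by
        rcases mul_eq_zero.1 (show z.re * z.im = 0 by linarith) with h | h
        · exact absurd h h0
        · exact h
      rw [hzim0] at hre'
      nlinarith
    · apply aux_mult_one a b z hz
      intro h0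
      have hzero : 2 * z * (2 * w + (a : ℂ)) = 0 := by
        rw [hwdef]; linear_combination h0
      rcases mul_eq_zero.1 hzero with h | h
      · have hz0 : z = 0 := by
          simpa using h
        rw [hwdef, hz0] at hreneg
        simp at hreneg
      · exact hne h
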